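/- Let Λ be a compact metric space, and suppose (L1)–(L3) hold: each S_λ is a semigroup on X with global attractor 𝒜_λ, all attractors are contained in a fixed bounded set D, and for each t > 0 the map λ ↦ S_λ(t)x is continuous uniformly for x in bounded sets. If λ ↦ 𝒜_λ is continuous (in the Hausdorff metric) at every λ ∈ Λ, then there exists a sequence t_n → ∞ such that sup_{λ∈Λ} d_H(S_λ(t_n)D, 𝒜_λ) → 0 as n → ∞ (equi-attraction along a sequence of times). -/

import Mathlib

open Filter Topology EMetric

/-- The Hausdorff semidistance `ρ(A,B) = sup_{a ∈ A} inf_{b ∈ B} d(a,b)`. -/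
noncomputable def rho {X : Type*} [MetricSpace X] (A B : Set X) : ENNReal :=
  ⨆ a ∈ A, infEdist a B

/-- A semigroup (semiflow) on a metric space `X`. -/
structure Semiflow (X : Type*) [MetricSpace X] where
  S : ℝ → X → X
  map_zero : ∀ x, S 0 x = x
  map_add : ∀ t s : ℝ, 0 ≤ t → 0 ≤ s → ∀ x, S (t + s) x = S t (S s x)
  cont : Continuous fun p : ℝ × X => S p.1 p.2

/-- `A` is the global attractor of the semigroup `σ`: a compact invariant set
attracting every bounded set in the Hausdorff semidistance. -/
def IsGlobalAttractor {X : Type*} [MetricSpace X] (σ : Semiflow X) (A : Set X) : Prop :=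
  IsCompact A ∧ (∀ t : ℝ, 0 ≤ t → σ.S t '' A = A) ∧
    ∀ B : Set X, Bornology.IsBounded B →
      Tendsto (fun t : ℝ => rho (σ.S t '' B) A) atTop (𝓝 0)

lemma infEdist_le_rho {X : Type*} [MetricSpace X] {A B : Set X} {a : X} (h : a ∈ A) :
    infEdist a B ≤ rho A B :=
  le_iSup₂ (f := fun a (_ : a ∈ A) => infEdist a B) a h

lemma rho_le {X : Type*} [MetricSpace X] {A B : Set X} {r : ENNReal}
    (h : ∀ a ∈ A, infEdist a B ≤ r) : rho A B ≤ r :=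
  iSup₂_le h

lemma rho_mono_left {X : Type*} [MetricSpace X] {A A' B : Set X} (h : A' ⊆ A) :
    rho A' B ≤ rho A B :=
  rho_le fun a ha => infEdist_le_rho (h ha)

lemma image_add_eq {X : Type*} [MetricSpace X] (σ : Semiflow X) {t s : ℝ}
    (ht : 0 ≤ t) (hs : 0 ≤ s) (B : Set X) :
    σ.S (t + s) '' B = σ.S t '' (σ.S s '' B) := by
  rw [Set.image_image]
  exact Set.image_congr fun x _ => σ.map_add t s ht hs x

lemma iter_inv {X : Type*} [MetricSpace X] (σ : Semiflow X) {B : Set X} {a : ℝ}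
    (ha : 0 ≤ a) (h : σ.S a '' B ⊆ B) : ∀ k : ℕ, σ.S (((k : ℝ) + 1) * a) '' B ⊆ B := by
  intro k
  induction k with
  | zero => simpa using h
  | succ m ih =>
      have h1 : (((m + 1 : ℕ) : ℝ) + 1) * a = ((m : ℝ) + 1) * a + a := by push_cast; ring
      have h2 : 0 ≤ ((m : ℝ) + 1) * a := by positivity
      rw [h1, image_add_eq σ h2 ha]
      exact (Set.image_mono h).trans ih

/-- Converse: if `Λ` is compact and the attractors `𝒜_λ` vary continuously in
`λ` (Hausdorff metric), then there is a sequence of times `t_n → ∞` along which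
the attraction `sup_λ d_H(S_λ(t_n)D, 𝒜_λ) → 0` is uniform in `λ`. -/
theorem equi_attraction_of_continuity {Λ X : Type*} [MetricSpace Λ]
    [CompactSpace Λ] [MetricSpace X] (S : Λ → Semiflow X) (𝒜 : Λ → Set X)
    (D : Set X)
    (hL1 : ∀ l : Λ, IsGlobalAttractor (S l) (𝒜 l))
    (hL2 : Bornology.IsBounded D ∧ ∀ l : Λ, 𝒜 l ⊆ D)
    (hL3 : ∀ t : ℝ, 0 < t → ∀ B : Set X, Bornology.IsBounded B → ∀ l₀ : Λ,
      ∀ ε : ℝ, 0 < ε → ∃ δ : ℝ, 0 < δ ∧ ∀ l : Λ, dist l l₀ < δ →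
        ∀ x ∈ B, dist ((S l).S t x) ((S l₀).S t x) < ε)
    (hcont : ∀ l₀ : Λ, Tendsto (fun l => hausdorffEdist (𝒜 l) (𝒜 l₀)) (𝓝 l₀) (𝓝 0)) :
    ∃ tseq : ℕ → ℝ, Tendsto tseq atTop atTop ∧
      Tendsto (fun n => ⨆ l : Λ, hausdorffEdist ((S l).S (tseq n) '' D) (𝒜 l))
        atTop (𝓝 0) := by
  classical
  obtain ⟨hDb, hAD⟩ := hL2
  set D₁ : Set X := Metric.thickening 1 D with hD₁def
  have hD₁b : Bornology.IsBounded D₁ := hDb.thickening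
  have hDD₁ : D ⊆ D₁ := Metric.self_subset_thickening one_pos D
  -- Step A: near each parameter there is an integer time making D₁ forward invariant
  have stepA : ∀ l₀ : Λ, ∃ δ : ℝ, 0 < δ ∧ ∃ n : ℕ, 0 < n ∧
      ∀ l, dist l l₀ < δ → (S l).S (n : ℝ) '' D₁ ⊆ D₁ := by
    intro l₀
    have hattr := (hL1 l₀).2.2 D₁ hD₁b
    have hev : ∀ᶠ t : ℝ in atTop,
        rho ((S l₀).S t '' D₁) (𝒜 l₀) < ENNReal.ofReal (1/4) :=
      hattr.eventually_lt_const (by simp [ENNReal.ofReal_pos])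
    obtain ⟨T, hT⟩ := eventually_atTop.1 hev
    obtain ⟨n, hnT⟩ := exists_nat_ge (max T 1)
    have hn1 : (1 : ℝ) ≤ n := le_trans (le_max_right T 1) hnT
    have hn0 : 0 < n := by exact_mod_cast lt_of_lt_of_le zero_lt_one hn1
    have hrho : rho ((S l₀).S (n : ℝ) '' D₁) (𝒜 l₀) < ENNReal.ofReal (1/4) :=
      hT n (le_trans (le_max_left T 1) hnT)
    obtain ⟨δ, hδ, hδS⟩ := hL3 n (by exact_mod_cast hn0) D₁ hD₁b l₀ (1/4) (by norm_num)
    refine ⟨δ, hδ, n, hn0, fun l hl => ?_⟩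
    rintro _ ⟨x, hx, rfl⟩
    rw [hD₁def, Metric.mem_thickening_iff_infEdist_lt]
    have hd : edist ((S l).S (n : ℝ) x) ((S l₀).S (n : ℝ) x) ≤ ENNReal.ofReal (1/4) := by
      rw [edist_dist]
      exact ENNReal.ofReal_le_ofReal (hδS l hl x hx).le
    calc infEdist ((S l).S (n : ℝ) x) D
        ≤ edist ((S l).S (n : ℝ) x) ((S l₀).S (n : ℝ) x)
            + infEdist ((S l₀).S (n : ℝ) x) D := infEdist_le_edist_add_infEdist
      _ ≤ ENNReal.ofReal (1/4) + infEdist ((S l₀).S (n : ℝ) x) (𝒜 l₀) :=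
          add_le_add hd (infEdist_anti (hAD l₀))
      _ ≤ ENNReal.ofReal (1/4) + ENNReal.ofReal (1/4) := by
          exact add_le_add le_rfl
            ((infEdist_le_rho (Set.mem_image_of_mem _ hx)).trans hrho.le)
      _ = ENNReal.ofReal (1/2) := by
          rw [← ENNReal.ofReal_add (by norm_num) (by norm_num)]; norm_num
      _ < ENNReal.ofReal 1 := by
          rw [ENNReal.ofReal_lt_ofReal_iff (by norm_num)]; norm_num
  choose δ hδpos nn hnn hinv using stepA
  -- Step B: a common forward-invariance time N
  obtain ⟨t, ht⟩ := isCompact_univ.elim_finite_subcover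
    (fun l₀ => Metric.ball l₀ (δ l₀)) (fun _ => Metric.isOpen_ball)
    (fun l _ => Set.mem_iUnion.2 ⟨l, Metric.mem_ball_self (hδpos l)⟩)
  set N : ℕ := ∏ i ∈ t, nn i with hNdef
  have hN1 : 1 ≤ N := Finset.one_le_prod' fun i _ => hnn i
  have hNer : (1 : ℝ) ≤ (N : ℝ) := by exact_mod_cast hN1
  have hinvN : ∀ l, (S l).S (N : ℝ) '' D₁ ⊆ D₁ := by
    intro l
    obtain ⟨i, hi, hli⟩ := Set.mem_iUnion₂.1 (ht (Set.mem_univ l))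
    obtain ⟨k, hk⟩ := Finset.dvd_prod_of_mem nn hi
    have hk0 : k ≠ 0 := by rintro rfl; omega
    obtain ⟨k', rfl⟩ := Nat.exists_eq_succ_of_ne_zero hk0
    have hbase : (S l).S ((nn i : ℝ)) '' D₁ ⊆ D₁ := hinv i l (Metric.mem_ball.1 hli)
    have := iter_inv (S l) (by positivity : (0:ℝ) ≤ (nn i : ℝ)) hbase k'
    have hcast : ((N : ℕ) : ℝ) = ((k' : ℝ) + 1) * (nn i : ℝ) := by
      rw [hNdef, hk]; push_cast; ring
    rwa [hcast]
  -- the key quantity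
  set g : ℕ → Λ → ENNReal :=
    fun m l => rho ((S l).S (((m : ℝ) + 1) * N) '' D₁) (𝒜 l) with hgdef
  have htime_pos : ∀ m : ℕ, (0 : ℝ) < ((m : ℝ) + 1) * N := by
    intro m; positivity
  have htime_nonneg : ∀ m : ℕ, (0 : ℝ) ≤ ((m : ℝ) + 1) * N := fun m => (htime_pos m).le
  -- monotonicity of the images, hence of g
  have himg : ∀ (m : ℕ) (l : Λ), (S l).S (((m : ℝ) + 1 + 1) * N) '' D₁
      ⊆ (S l).S (((m : ℝ) + 1) * N) '' D₁ := by
    intro m l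
    have h1 : ((m : ℝ) + 1 + 1) * N = ((m : ℝ) + 1) * N + N := by ring
    rw [h1, image_add_eq (S l) (htime_nonneg m) (by positivity)]
    exact Set.image_mono (hinvN l)
  have hg_anti : ∀ l, Antitone fun m => g m l := by
    intro l
    refine antitone_nat_of_succ_le fun m => ?_
    have : (((m + 1 : ℕ) : ℝ) + 1) * N = ((m : ℝ) + 1 + 1) * N := by push_cast; ring
    simp only [hgdef, this]
    exact rho_mono_left (himg m l)
  have hg_tend : ∀ l, Tendsto (fun m => g m l) atTop (𝓝 0) := by
    intro l
    have hseq : Tendsto (fun m : ℕ => ((m : ℝ) + 1) * N) atTop atTop := by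
      apply Tendsto.atTop_mul_const (by positivity : (0:ℝ) < (N:ℝ))
      exact tendsto_atTop_add_const_right _ 1 tendsto_natCast_atTop_atTop
    exact ((hL1 l).2.2 D₁ hD₁b).comp hseq
  -- upper semicontinuity : the sublevel sets of g are open
  have hg_open : ∀ (m : ℕ) (ε : ENNReal), IsOpen {l | g m l < ε} := by
    intro m ε
    rw [isOpen_iff_mem_nhds]
    intro l₀ hl₀
    obtain ⟨r, hr0, hgr, hrε⟩ := ENNReal.lt_iff_exists_real_btwn.1 hl₀
    obtain ⟨s, hs0, hrs, hsε⟩ := ENNReal.lt_iff_exists_real_btwn.1 hrε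
    have hspos : 0 < s := ENNReal.ofReal_pos.1 (lt_of_le_of_lt zero_le hrs)
    have hrs' : r < s := (ENNReal.ofReal_lt_ofReal_iff hspos).1 hrs
    set c : ℝ := (s - r) / 2 with hcdef
    have hc : 0 < c := by rw [hcdef]; linarith
    obtain ⟨δ', hδ'pos, hδ'⟩ := hL3 _ (htime_pos m) D₁ hD₁b l₀ c hc
    have E1 : ∀ᶠ l in 𝓝 l₀, dist l l₀ < δ' := by
      filter_upwards [Metric.ball_mem_nhds l₀ hδ'pos] with l hl using Metric.mem_ball.1 hl
    have E2 : ∀ᶠ l in 𝓝 l₀, hausdorffEdist (𝒜 l) (𝒜 l₀) < ENNReal.ofReal c :=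
      (hcont l₀).eventually_lt_const (ENNReal.ofReal_pos.2 hc)
    filter_upwards [E1, E2] with l h1 h2
    refine lt_of_le_of_lt ?_ hsε
    refine rho_le ?_
    rintro _ ⟨x, hx, rfl⟩
    have hd : edist ((S l).S (((m : ℝ) + 1) * N) x) ((S l₀).S (((m : ℝ) + 1) * N) x)
        ≤ ENNReal.ofReal c := by
      rw [edist_dist]
      exact ENNReal.ofReal_le_ofReal (hδ' l h1 x hx).le
    calc infEdist ((S l).S (((m : ℝ) + 1) * N) x) (𝒜 l)
        ≤ edist ((S l).S (((m : ℝ) + 1) * N) x) ((S l₀).S (((m : ℝ) + 1) * N) x)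
            + infEdist ((S l₀).S (((m : ℝ) + 1) * N) x) (𝒜 l) :=
          infEdist_le_edist_add_infEdist
      _ ≤ ENNReal.ofReal c + (infEdist ((S l₀).S (((m : ℝ) + 1) * N) x) (𝒜 l₀)
            + hausdorffEdist (𝒜 l₀) (𝒜 l)) :=
          add_le_add hd infEdist_le_infEdist_add_hausdorffEdist
      _ ≤ ENNReal.ofReal c + (ENNReal.ofReal r + ENNReal.ofReal c) := by
          refine add_le_add le_rfl (add_le_add ?_ ?_)
          · exact (infEdist_le_rho (Set.mem_image_of_mem _ hx)).trans hgr.le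
          · exact (le_of_eq hausdorffEdist_comm).trans h2.le
      _ = ENNReal.ofReal (c + (r + c)) := by
          rw [← ENNReal.ofReal_add hr0 hc.le, ← ENNReal.ofReal_add hc.le (by positivity)]
      _ = ENNReal.ofReal s := by congr 1; rw [hcdef]; ring
  -- Dini-type argument from compactness
  have dini : ∀ ε : ENNReal, 0 < ε → ∃ m₀ : ℕ, ∀ m ≥ m₀, ∀ l, g m l ≤ ε := by
    intro ε hε
    have hcov : Set.univ ⊆ ⋃ m : ℕ, {l | g m l < ε} := by
      intro l _
      obtain ⟨m, hm⟩ := ((hg_tend l).eventually_lt_const hε).exists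
      exact Set.mem_iUnion.2 ⟨m, hm⟩
    obtain ⟨u, hu⟩ := isCompact_univ.elim_finite_subcover _ (fun m => hg_open m ε) hcov
    refine ⟨u.sup id, fun m hm l => ?_⟩
    obtain ⟨i, hi, hli⟩ := Set.mem_iUnion₂.1 (hu (Set.mem_univ l))
    have : g m l ≤ g i l := hg_anti l ((Finset.le_sup (f := id) hi).trans hm)
    exact this.trans hli.le
  refine ⟨fun m => ((m : ℝ) + 1) * N, ?_, ?_⟩
  · apply Tendsto.atTop_mul_const (by positivity : (0:ℝ) < (N:ℝ))
    exact tendsto_atTop_add_const_right _ 1 tendsto_natCast_atTop_atTop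
  · rw [ENNReal.tendsto_atTop_zero]
    intro ε hε
    obtain ⟨m₀, hm₀⟩ := dini ε hε
    refine ⟨m₀, fun m hm => ?_⟩
    refine iSup_le fun l => le_trans ?_ (hm₀ m hm l)
    refine hausdorffEdist_le_of_infEdist ?_ ?_
    · intro x hx
      exact infEdist_le_rho (Set.image_mono hDD₁ hx)
    · intro x hx
      have hxin : x ∈ (S l).S (((m : ℝ) + 1) * N) '' D := by
        have := (hL1 l).2.1 _ (htime_nonneg m)
        rw [← this] at hx
        exact Set.image_mono (hAD l) hx
      simp [infEdist_zero_of_mem hxin]
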